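/- Let $H_{n+1} = [s_{i+j}]_{i,j=0}^{n+1}$ be an $(n+2)\times(n+2)$ partial Hankel matrix where only $s_{2n+1}$ is unspecified. Then every fully specified principal submatrix of $H_{n+1}$ is positive definite if and only if $H_n = [s_{i+j}]_{i,j=0}^n$ is positive definite and $s_{2n+2} - w_n^T H_{n-1}^{-1} w_n > 0$, where $w_n^T = (s_{n+1}, s_{n+2}, \ldots, s_{2n})$ and $H_{n-1} = [s_{i+j}]_{i,j=0}^{n-1}$. -/

import Mathlib

open Matrix

section Aux
variable {m n : Type*} [Fintype m] [Fintype n] [DecidableEq m] [DecidableEq n]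

lemma posDef_submatrix_inj {M : Matrix n n ℝ} (hM : M.PosDef) {f : m → n}
    (hf : Function.Injective f) : (M.submatrix f f).PosDef := by
  refine posDef_iff_dotProduct_mulVec.mpr ⟨hM.1.submatrix f, fun x hx => ?_⟩
  set P : Matrix n m ℝ := (1 : Matrix n n ℝ).submatrix id f with hP
  have hMs : M.submatrix f f = (1 : Matrix n n ℝ).submatrix f id * M * P := by
    rw [(by simp : M = 1 * M * 1), submatrix_mul (he₂ := Function.bijective_id),
      submatrix_mul (he₂ := Function.bijective_id), submatrix_id_id]
    simp [hP, Matrix.mul_assoc]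
  have hPt : (1 : Matrix n n ℝ).submatrix f id = Pᵀ := by
    rw [hP, transpose_submatrix, transpose_one]
  set y : n → ℝ := P *ᵥ x with hy
  have hyf : ∀ i, y (f i) = x i := by
    intro i
    simp only [hy, hP, mulVec, dotProduct, submatrix_apply, id_eq, one_apply]
    rw [Finset.sum_eq_single i]
    · simp
    · intro b _ hb; simp [(hf.ne hb).symm]
    · simp
  have hy0 : y ≠ 0 := by
    obtain ⟨i, hi⟩ := Function.ne_iff.mp hx
    intro h
    exact hi (by rw [← hyf i, h]; rfl)
  have key : star x ⬝ᵥ (M.submatrix f f) *ᵥ x = star y ⬝ᵥ M *ᵥ y := by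
    rw [hMs, hPt, ← mulVec_mulVec, ← mulVec_mulVec, star_trivial, star_trivial,
      dotProduct_mulVec, vecMul_transpose]
  rw [key]
  exact hM.dotProduct_mulVec_pos hy0

lemma posDef_submatrix_equiv' {M : Matrix n n ℝ} (e : m ≃ n) :
    (M.submatrix e e).PosDef ↔ M.PosDef :=
  ⟨fun h => by simpa [Matrix.submatrix_submatrix] using posDef_submatrix_inj h e.symm.injective,
   fun h => posDef_submatrix_inj h e.injective⟩

lemma posDef_fromBlocks₁₁' {A : Matrix m m ℝ} (B : Matrix m n ℝ) (D : Matrix n n ℝ)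
    (hA : A.PosDef) [Invertible A] :
    (fromBlocks A B Bᴴ D).PosDef ↔ (D - Bᴴ * A⁻¹ * B).PosDef := by
  rw [posDef_iff_dotProduct_mulVec, posDef_iff_dotProduct_mulVec, IsHermitian.fromBlocks₁₁ _ _ hA.1]
  constructor
  · rintro ⟨h1, h2⟩
    refine ⟨h1, fun x hx => ?_⟩
    have hv : (-((A⁻¹ * B) *ᵥ x) ⊕ᵥ x) ≠ 0 := fun h => hx (funext fun i => congrFun h (Sum.inr i))
    have := h2 hv
    rwa [dotProduct_mulVec, schur_complement_eq₁₁ B D _ _ hA.1, neg_add_cancel, dotProduct_zero,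
      zero_add, ← dotProduct_mulVec] at this
  · rintro ⟨h1, h2⟩
    refine ⟨h1, fun x hx => ?_⟩
    rw [dotProduct_mulVec, ← Sum.elim_comp_inl_inr x, schur_complement_eq₁₁ B D _ _ hA.1]
    by_cases hxr : x ∘ Sum.inr = 0
    · have hxl : x ∘ Sum.inl + (A⁻¹ * B) *ᵥ (x ∘ Sum.inr) ≠ 0 := by
        rw [hxr, mulVec_zero, add_zero]
        intro h
        apply hx
        funext i
        cases i with
        | inl i => exact congrFun h i
        | inr i => exact congrFun hxr i
      have t1 := hA.dotProduct_mulVec_pos hxl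
      rw [dotProduct_mulVec] at t1
      have t2 : star (x ∘ Sum.inr) ᵥ* (D - Bᴴ * A⁻¹ * B) ⬝ᵥ (x ∘ Sum.inr) = 0 := by
        rw [hxr]; simp
      linarith
    · have t2 := h2 hxr
      rw [dotProduct_mulVec] at t2
      have t1 := hA.posSemidef.dotProduct_mulVec_nonneg (x ∘ Sum.inl + (A⁻¹ * B) *ᵥ (x ∘ Sum.inr))
      rw [dotProduct_mulVec] at t1
      linarith

lemma posDef_one_dim_iff (D : Matrix (Fin 1) (Fin 1) ℝ) : D.PosDef ↔ 0 < D 0 0 := by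
  constructor
  · intro h
    have := h.dotProduct_mulVec_pos (x := fun _ => 1) (by intro hc; simpa using congrFun hc 0)
    simpa [dotProduct, mulVec, Fin.sum_univ_one] using this
  · intro h
    refine posDef_iff_dotProduct_mulVec.mpr ⟨?_, fun x hx => ?_⟩
    · ext i j; fin_cases i; fin_cases j; simp [conjTranspose_apply]
    · have hx0 : x 0 ≠ 0 := by
        intro h0; apply hx; funext i; fin_cases i; exact h0
      have hval : star x ⬝ᵥ D *ᵥ x = D 0 0 * (x 0 * x 0) := by
        simp [dotProduct, mulVec, Fin.sum_univ_one]; ring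
      rw [hval]
      exact mul_pos h (mul_self_pos.mpr hx0)

end Aux

/-- Hankel matrix of a sequence. -/
def hankelMatrix (s : ℕ → ℝ) (n : ℕ) : Matrix (Fin (n + 1)) (Fin (n + 1)) ℝ :=
  Matrix.of fun i j => s ((i : ℕ) + (j : ℕ))

theorem stmt_5 (n : ℕ) (hn : 1 ≤ n) (s : ℕ → ℝ)
    (w : Fin n → ℝ) (hw : ∀ i, w i = s (n + 1 + (i : ℕ))) :
    (∀ α : Finset (Fin (n + 2)),
        ¬((⟨n, by omega⟩ : Fin (n + 2)) ∈ α ∧ (⟨n + 1, by omega⟩ : Fin (n + 2)) ∈ α) →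
        (((Matrix.of fun i j : Fin (n + 2) => s ((i : ℕ) + (j : ℕ)))).submatrix
          (fun i : α => (i : Fin (n + 2))) (fun i : α => (i : Fin (n + 2)))).PosDef)
      ↔
    ((hankelMatrix s n).PosDef ∧
      0 < s (2 * n + 2) - w ⬝ᵥ (Matrix.of fun i j : Fin n => s ((i : ℕ) + (j : ℕ)))⁻¹ *ᵥ w) := by
  set M : Matrix (Fin (n+2)) (Fin (n+2)) ℝ :=
    Matrix.of (fun i j : Fin (n + 2) => s ((i : ℕ) + (j : ℕ))) with hMdef
  set A : Matrix (Fin n) (Fin n) ℝ :=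
    Matrix.of (fun i j : Fin n => s ((i : ℕ) + (j : ℕ))) with hAdef
  set B : Matrix (Fin n) (Fin 1) ℝ := Matrix.of (fun i _ => w i) with hBdef
  set D : Matrix (Fin 1) (Fin 1) ℝ := Matrix.of (fun _ _ => s (2 * n + 2)) with hDdef
  set f2 : Fin (n+1) → Fin (n+2) :=
    fun i => if h : (i : ℕ) < n then ⟨i, by omega⟩ else ⟨n+1, by omega⟩ with hf2def
  set K : Matrix (Fin (n+1)) (Fin (n+1)) ℝ := M.submatrix f2 f2 with hKdef
  -- A is a principal submatrix of hankelMatrix s n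
  have hAsub : A = (hankelMatrix s n).submatrix Fin.castSucc Fin.castSucc := by
    ext i j; simp [hAdef, hankelMatrix]
  -- relation of K with block matrix
  have hblocks : fromBlocks A B Bᴴ D = K.submatrix finSumFinEquiv finSumFinEquiv := by
    ext i j
    rcases i with i | i <;> rcases j with j | j <;>
      simp [hKdef, hf2def, fromBlocks, hMdef, hAdef, hBdef, hDdef, finSumFinEquiv,
        Fin.castAdd, Fin.natAdd, Fin.castLE, hw, Fin.isValue, conjTranspose_apply] <;>
      (congr 1; omega)
  have hKiff : K.PosDef ↔ (fromBlocks A B Bᴴ D).PosDef := by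
    rw [hblocks]; exact (posDef_submatrix_equiv' finSumFinEquiv).symm
  have hSentry : ∀ [Invertible A], (D - Bᴴ * A⁻¹ * B) 0 0 = s (2*n+2) - w ⬝ᵥ A⁻¹ *ᵥ w := by
    intro _
    simp [hDdef, hBdef, Matrix.mul_apply, Matrix.sub_apply, dotProduct, mulVec,
      conjTranspose_apply, Finset.mul_sum, Finset.sum_mul, mul_comm, mul_assoc, mul_left_comm]
    rw [Finset.sum_comm]
    refine Finset.sum_congr rfl fun i _ => Finset.sum_congr rfl fun j _ => by ring
  have hf2val : ∀ i : Fin (n+1), (f2 i : ℕ) = if (i : ℕ) < n then (i : ℕ) else n + 1 := by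
    intro i
    simp only [hf2def]
    by_cases h : (i : ℕ) < n
    · rw [dif_pos h, if_pos h]
    · rw [dif_neg h, if_neg h]
  have hf2inj : Function.Injective f2 := by
    intro a b hab
    have h' := congrArg Fin.val hab
    rw [hf2val, hf2val] at h'
    split_ifs at h' <;> (apply Fin.ext; omega)
  constructor
  · intro h
    -- H_n is positive definite
    have hHn : (hankelMatrix s n).PosDef := by
      set α₁ : Finset (Fin (n+2)) := Finset.univ.erase ⟨n+1, by omega⟩ with hα₁
      have h1 := h α₁ (by simp [hα₁])
      have hg1mem : ∀ i : Fin (n+1), (⟨(i : ℕ), by omega⟩ : Fin (n+2)) ∈ α₁ := by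
        intro i
        simp only [hα₁, Finset.mem_erase, Finset.mem_univ, and_true]
        exact Fin.ne_of_val_ne (show (i : ℕ) ≠ n + 1 by omega)
      set g1 : Fin (n+1) → α₁ := fun i => ⟨⟨(i : ℕ), by omega⟩, hg1mem i⟩ with hg1
      have hg1inj : Function.Injective g1 := by
        intro a b hab
        simp only [hg1, Subtype.mk.injEq, Fin.mk.injEq] at hab
        exact Fin.ext hab
      have heq : hankelMatrix s n =
          (M.submatrix (fun i : α₁ => (i : Fin (n+2))) (fun i : α₁ => (i : Fin (n+2)))).submatrix
            g1 g1 := by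
        ext i j; simp [hankelMatrix, hMdef, hg1]
      rw [heq]
      exact posDef_submatrix_inj h1 hg1inj
    have hA : A.PosDef := by
      rw [hAsub]; exact posDef_submatrix_inj hHn (Fin.castSucc_injective _)
    haveI := hA.isUnit.invertible
    have hK : K.PosDef := by
      set α₂ : Finset (Fin (n+2)) := Finset.univ.erase ⟨n, by omega⟩ with hα₂
      have h2 := h α₂ (by simp [hα₂])
      have hg2mem : ∀ i : Fin (n+1), f2 i ∈ α₂ := by
        intro i
        simp only [hα₂, Finset.mem_erase, Finset.mem_univ, and_true]
        apply Fin.ne_of_val_ne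
        rw [hf2val]
        simp only [Fin.val_mk]
        split_ifs <;> omega
      set g2 : Fin (n+1) → α₂ := fun i => ⟨f2 i, hg2mem i⟩ with hg2
      have hg2inj : Function.Injective g2 := by
        intro a b hab
        simp only [hg2, Subtype.mk.injEq] at hab
        exact hf2inj hab
      have heq : K =
          (M.submatrix (fun i : α₂ => (i : Fin (n+2))) (fun i : α₂ => (i : Fin (n+2)))).submatrix
            g2 g2 := by
        ext i j; simp [hKdef, hg2]
      rw [heq]
      exact posDef_submatrix_inj h2 hg2inj
    have hS := (posDef_fromBlocks₁₁' B D hA).mp (hKiff.mp hK)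
    have hval := (posDef_one_dim_iff _).mp hS
    rw [hSentry] at hval
    exact ⟨hHn, hval⟩
  · rintro ⟨hHn, hschur⟩ α hα
    have hA : A.PosDef := by
      rw [hAsub]; exact posDef_submatrix_inj hHn (Fin.castSucc_injective _)
    haveI := hA.isUnit.invertible
    have hK : K.PosDef := by
      refine hKiff.mpr ((posDef_fromBlocks₁₁' B D hA).mpr ((posDef_one_dim_iff _).mpr ?_))
      rw [hSentry]; exact hschur
    by_cases hmem : (⟨n+1, by omega⟩ : Fin (n+2)) ∈ α
    · -- then n ∉ α; use K
      have hn' : (⟨n, by omega⟩ : Fin (n+2)) ∉ α := fun hc => hα ⟨hc, hmem⟩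
      have hne : ∀ a : α, ((a : Fin (n+2)) : ℕ) ≠ n := by
        intro a hc
        exact hn' (by
          have : (a : Fin (n+2)) = ⟨n, by omega⟩ := Fin.ext hc
          rw [← this]; exact a.2)
      set g : α → Fin (n+1) :=
        fun a => if h : ((a : Fin (n+2)) : ℕ) < n then ⟨(a : Fin (n+2)), by omega⟩
          else ⟨n, by omega⟩ with hg
      have hgval : ∀ a : α, ((g a : Fin (n+1)) : ℕ) =
          if ((a : Fin (n+2)) : ℕ) < n then ((a : Fin (n+2)) : ℕ) else n := by
        intro a
        simp only [hg]
        by_cases h : ((a : Fin (n+2)) : ℕ) < n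
        · rw [dif_pos h, if_pos h]
        · rw [dif_neg h, if_neg h]
      have hcg : ∀ a : α, f2 (g a) = (a : Fin (n+2)) := by
        intro a
        have h1 := hne a
        have h2 : ((a : Fin (n+2)) : ℕ) < n + 2 := (a : Fin (n+2)).isLt
        apply Fin.ext
        rw [hf2val, hgval]
        split_ifs <;> omega
      have hginj : Function.Injective g := by
        apply Function.Injective.of_comp (f := f2)
        have : f2 ∘ g = fun a : α => (a : Fin (n+2)) := funext hcg
        rw [this]
        exact Subtype.coe_injective
      have heq : M.submatrix (fun i : α => (i : Fin (n+2))) (fun i : α => (i : Fin (n+2))) =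
          K.submatrix g g := by
        ext i j
        rw [hKdef]
        simp only [submatrix_apply, submatrix_submatrix, Function.comp, hcg]
      rw [heq]
      exact posDef_submatrix_inj hK hginj
    · -- n+1 ∉ α; use hankelMatrix
      have hval : ∀ a : α, ((a : Fin (n+2)) : ℕ) < n + 1 := by
        intro a
        have : ((a : Fin (n+2)) : ℕ) ≠ n + 1 := by
          intro hc
          exact hmem (by
            have : (a : Fin (n+2)) = ⟨n+1, by omega⟩ := Fin.ext hc
            rw [← this]; exact a.2)
        have := (a : Fin (n+2)).isLt
        omega
      set g : α → Fin (n+1) := fun a => ⟨(a : Fin (n+2)), hval a⟩ with hg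
      have hginj : Function.Injective g := by
        intro a b hab
        simp only [hg, Fin.mk.injEq] at hab
        exact Subtype.ext (Fin.ext hab)
      have heq : M.submatrix (fun i : α => (i : Fin (n+2))) (fun i : α => (i : Fin (n+2))) =
          (hankelMatrix s n).submatrix g g := by
        ext i j; simp [hankelMatrix, hMdef, hg]
      rw [heq]
      exact posDef_submatrix_inj hHn hginj
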